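/- If F : F_2^n → F_2^n is an APN function with n ≥ 3, then lin(F) ≤ 2^n − 4. -/

import Mathlib

def IsAPN {n : ℕ} (F : (Fin n → ZMod 2) → (Fin n → ZMod 2)) : Prop :=
  ∀ a : Fin n → ZMod 2, a ≠ 0 → ∀ b : Fin n → ZMod 2,
    (Finset.univ.filter (fun x => F x + F (x + a) = b)).card ≤ 2

def dot {t : ℕ} (a b : Fin t → ZMod 2) : ZMod 2 := ∑ i, a i * b i

noncomputable def walshF {n : ℕ} (F : (Fin n → ZMod 2) → (Fin n → ZMod 2))
    (a b : Fin n → ZMod 2) : ℤ :=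
  ∑ x : Fin n → ZMod 2, (-1 : ℤ) ^ (dot a x + dot b (F x)).val

noncomputable def linF {n : ℕ} (F : (Fin n → ZMod 2) → (Fin n → ZMod 2)) : ℕ :=
  Finset.sup (Finset.univ.filter
      (fun p : (Fin n → ZMod 2) × (Fin n → ZMod 2) => p.2 ≠ 0))
    (fun p => (walshF F p.1 p.2).natAbs)

namespace Stmt14

open Finset

/-! ### Scalar lemmas over `ZMod 2` -/

def sgn2 (s : ZMod 2) : ℤ := if s = 0 then 1 else -1

lemma sgn2_pow : ∀ s : ZMod 2, ((-1 : ℤ)) ^ s.val = sgn2 s := by decide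
lemma sgn2_add : ∀ s t : ZMod 2, sgn2 (s + t) = sgn2 s * sgn2 t := by decide
lemma sgn2_zero : sgn2 0 = 1 := rfl
lemma sgn2_add_one : ∀ s : ZMod 2, sgn2 (s + 1) = - sgn2 s := by decide
lemma sgn2_cases : ∀ s : ZMod 2, sgn2 s = 1 ∨ sgn2 s = -1 := by decide
lemma z2_add_self : ∀ s : ZMod 2, s + s = 0 := by decide
lemma z2_ne : ∀ s c : ZMod 2, s ≠ c → s = c + 1 := by decide
lemma z2_ne_zero : ∀ s : ZMod 2, s ≠ 0 → s = 1 := by decide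
lemma z2_eq_of_add_zero : ∀ s t : ZMod 2, s + t = 0 → s = t := by decide

variable {n : ℕ}

/-! ### Vector lemmas -/

lemma vadd_self (x : Fin n → ZMod 2) : x + x = 0 :=
  funext fun i => z2_add_self (x i)

lemma vadd_add_self (x e : Fin n → ZMod 2) : x + e + e = x := by
  rw [add_assoc, vadd_self, add_zero]

lemma vshift_iff {A d t : Fin n → ZMod 2} : A + t = d ↔ A = d + t := by
  constructor
  · rintro rfl; rw [add_assoc, vadd_self, add_zero]
  · rintro rfl; rw [add_assoc, vadd_self, add_zero]

lemma vcancel {x e : Fin n → ZMod 2} (h : x + e = x) : e = 0 := by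
  have h2 : x + (x + e) = x + x := congrArg (fun z => x + z) h
  rwa [← add_assoc, vadd_self, zero_add] at h2

/-! ### dot lemmas -/

lemma dot_add_right (a x y : Fin n → ZMod 2) : dot a (x + y) = dot a x + dot a y := by
  unfold dot
  rw [← Finset.sum_add_distrib]
  exact Finset.sum_congr rfl fun i _ => by simp [Pi.add_apply, mul_add]

lemma dot_add_left (a b x : Fin n → ZMod 2) : dot (a + b) x = dot a x + dot b x := by
  unfold dot
  rw [← Finset.sum_add_distrib]
  exact Finset.sum_congr rfl fun i _ => by simp [Pi.add_apply, add_mul]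

lemma dot_zero_left (x : Fin n → ZMod 2) : dot 0 x = 0 := by simp [dot]

lemma dot_zero_right (a : Fin n → ZMod 2) : dot a 0 = 0 := by simp [dot]

lemma dot_smul_right (a : Fin n → ZMod 2) (c : ZMod 2) (v : Fin n → ZMod 2) :
    dot a (c • v) = c * dot a v := by
  unfold dot
  rw [Finset.mul_sum]
  exact Finset.sum_congr rfl fun i _ => by
    simp [Pi.smul_apply, smul_eq_mul]; ring

def unitV (i : Fin n) : Fin n → ZMod 2 := fun k => if k = i then 1 else 0

lemma unitV_self (i : Fin n) : unitV i i = 1 := by simp [unitV]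

lemma unitV_ne {i k : Fin n} (h : k ≠ i) : unitV i k = 0 := by simp [unitV, h]

lemma dot_unitV_right (a : Fin n → ZMod 2) (i : Fin n) : dot a (unitV i) = a i := by
  unfold dot unitV
  simp [mul_ite, mul_one, mul_zero]

lemma dot_unitV_left (i : Fin n) (x : Fin n → ZMod 2) : dot (unitV i) x = x i := by
  unfold dot unitV
  simp [ite_mul, one_mul, zero_mul]

lemma dot_sum_right {ι : Type*} (a : Fin n → ZMod 2) (s : Finset ι) (f : ι → Fin n → ZMod 2) :
    dot a (∑ x ∈ s, f x) = ∑ x ∈ s, dot a (f x) := by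
  classical
  induction s using Finset.induction_on with
  | empty => simp [dot_zero_right]
  | @insert x s' h ih =>
    rw [Finset.sum_insert h, dot_add_right, ih, Finset.sum_insert h]


/-! ### Pairing workhorse -/

lemma pair_sum {M : Type*} [AddCommMonoid M] (A : Finset (Fin n → ZMod 2))
    (r : Fin n → ZMod 2) (j : Fin n) (hrj : r j = 1)
    (hA : ∀ x ∈ A, x + r ∈ A) (f : (Fin n → ZMod 2) → M) :
    ∑ x ∈ A, f x = ∑ x ∈ A.filter (fun x => x j = 0), (f x + f (x + r)) := by
  classical
  rw [← Finset.sum_filter_add_sum_filter_not A (fun x => x j = 0) f, Finset.sum_add_distrib]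
  congr 1
  refine Finset.sum_nbij' (i := fun x => x + r) (j := fun x => x + r) ?_ ?_ ?_ ?_ ?_
  · intro x hx
    rw [Finset.mem_filter] at hx ⊢
    refine ⟨hA x hx.1, ?_⟩
    have hx1 : x j = 1 := z2_ne_zero _ hx.2
    show (x + r) j = 0
    rw [Pi.add_apply, hx1, hrj]
    decide
  · intro x hx
    rw [Finset.mem_filter] at hx ⊢
    refine ⟨hA x hx.1, ?_⟩
    show ¬ (x + r) j = 0
    rw [Pi.add_apply, hx.2, hrj]
    decide
  · intro x _; exact vadd_add_self x r
  · intro x _; exact vadd_add_self x r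
  · intro x _; rw [vadd_add_self]

lemma pair_card (A : Finset (Fin n → ZMod 2)) (r : Fin n → ZMod 2) (j : Fin n)
    (hrj : r j = 1) (hA : ∀ x ∈ A, x + r ∈ A) :
    A.card = 2 * (A.filter (fun x => x j = 0)).card := by
  have h := pair_sum A r j hrj hA (fun _ => (1 : ℕ))
  simpa [Finset.sum_const, two_mul, mul_comm] using h

lemma card_univ_V : (Finset.univ : Finset (Fin n → ZMod 2)).card = 2 ^ n := by
  rw [Finset.card_univ]
  rw [Fintype.card_fun]
  simp

/-- coordinate-zero slice of the whole space -/
lemma card_coord_slice (j : Fin n) :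
    2 * ((Finset.univ : Finset (Fin n → ZMod 2)).filter (fun x => x j = 0)).card = 2 ^ n := by
  rw [← pair_card Finset.univ (unitV j) j (unitV_self j) (fun x _ => Finset.mem_univ _),
    card_univ_V]

/-- Orthogonality: nontrivial character sums vanish. -/
lemma ortho {z : Fin n → ZMod 2} (hz : z ≠ 0) :
    ∑ u : Fin n → ZMod 2, sgn2 (dot u z) = 0 := by
  classical
  obtain ⟨i, hi⟩ : ∃ i, z i ≠ 0 := by
    by_contra h
    push_neg at h
    exact hz (funext fun i => h i)
  have hzi : z i = 1 := z2_ne_zero _ hi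
  rw [pair_sum Finset.univ (unitV i) i (unitV_self i) (fun x _ => Finset.mem_univ _)]
  refine Finset.sum_eq_zero fun u _ => ?_
  rw [dot_add_left, dot_unitV_left, hzi, sgn2_add_one]
  ring

/-- The sum of `sgn2 (dot u d)` over a "hyperplane" `dot b d = 0` vanishes provided there is
`h₀` in the hyperplane with `dot u h₀ = 1`. -/
lemma hyperplane_char_sum (b u h₀ : Fin n → ZMod 2)
    (hh₀H : dot b h₀ = 0) (hh₀u : dot u h₀ = 1) :
    ∑ d ∈ Finset.univ.filter (fun d : Fin n → ZMod 2 => dot b d = 0), sgn2 (dot u d) = 0 := by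
  classical
  obtain ⟨i, hi⟩ : ∃ i, h₀ i ≠ 0 := by
    by_contra h
    push_neg at h
    have : h₀ = 0 := funext fun i => h i
    rw [this, dot_zero_right] at hh₀u
    exact one_ne_zero hh₀u.symm
  have hh0i : h₀ i = 1 := z2_ne_zero _ hi
  have hclosed : ∀ x ∈ Finset.univ.filter (fun d : Fin n → ZMod 2 => dot b d = 0),
      x + h₀ ∈ Finset.univ.filter (fun d : Fin n → ZMod 2 => dot b d = 0) := by
    intro x hx
    rw [Finset.mem_filter] at hx ⊢
    exact ⟨Finset.mem_univ _, by rw [dot_add_right, hx.2, hh₀H, add_zero]⟩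
  rw [pair_sum _ h₀ i hh0i hclosed]
  refine Finset.sum_eq_zero fun d _ => ?_
  rw [dot_add_right, hh₀u, sgn2_add_one]
  ring

/-- Independence: if `b ≠ 0`, `u ≠ 0`, `u ≠ b` then some `h₀` has `dot b h₀ = 0`, `dot u h₀ = 1`. -/
lemma exists_indep (b u : Fin n → ZMod 2) (hb : b ≠ 0) (hu : u ≠ 0) (hub : u ≠ b) :
    ∃ h₀, dot b h₀ = 0 ∧ dot u h₀ = 1 := by
  classical
  by_contra h
  push_neg at h
  have h' : ∀ x, dot b x = 0 → dot u x = 0 := by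
    intro x hx
    by_contra hne
    exact (z2_ne_zero _ hne ▸ (h x hx)) rfl
  obtain ⟨j₀, hj₀⟩ : ∃ i, b i ≠ 0 := by
    by_contra hh; push_neg at hh; exact hb (funext fun i => hh i)
  have hbj : b j₀ = 1 := z2_ne_zero _ hj₀
  have key : ∀ x, dot u x = dot b x * dot u (unitV j₀) := by
    intro x
    have hx' : dot b (x + dot b x • unitV j₀) = 0 := by
      rw [dot_add_right, dot_smul_right, dot_unitV_right, hbj, mul_one, z2_add_self]
    have h2 := h' _ hx'
    rw [dot_add_right, dot_smul_right] at h2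
    exact z2_eq_of_add_zero _ _ h2
  by_cases hc : dot u (unitV j₀) = 0
  · apply hu
    funext i
    have := key (unitV i)
    rw [dot_unitV_right, dot_unitV_right, hc, mul_zero] at this
    simpa using this
  · have hc1 : dot u (unitV j₀) = 1 := z2_ne_zero _ hc
    apply hub
    funext i
    have := key (unitV i)
    rw [dot_unitV_right, dot_unitV_right, hc1, mul_one] at this
    exact this


/-! ### Derivative equidistribution interface and Walsh squares -/

def Trans14 {n : ℕ} (b : Fin n → ZMod 2) (Ψ : (Fin n → ZMod 2) → (Fin n → ZMod 2)) : Prop :=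
  ∀ e : Fin n → ZMod 2, e ≠ 0 → ∀ j : Fin n, e j = 1 →
    (∀ x ∈ Finset.univ.filter (fun x : Fin n → ZMod 2 => x j = 0),
       ∀ y ∈ Finset.univ.filter (fun x : Fin n → ZMod 2 => x j = 0),
       Ψ x + Ψ (x + e) = Ψ y + Ψ (y + e) → x = y) ∧
    (Finset.univ.filter (fun x : Fin n → ZMod 2 => x j = 0)).image
        (fun x => Ψ x + Ψ (x + e))
      = Finset.univ.filter (fun d : Fin n → ZMod 2 => dot b d = 0)

lemma exists_one_coord {e : Fin n → ZMod 2} (he : e ≠ 0) : ∃ j, e j = 1 := by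
  by_contra h
  push_neg at h
  apply he
  funext i
  rcases (by decide : ∀ s : ZMod 2, s = 0 ∨ s = 1) (e i) with h0 | h1
  · exact h0
  · exact absurd h1 (h i)

lemma deriv_sum_zero (b : Fin n → ZMod 2) (hb : b ≠ 0)
    (Ψ : (Fin n → ZMod 2) → (Fin n → ZMod 2)) (htr : Trans14 b Ψ)
    (u : Fin n → ZMod 2) (hu : u ≠ 0) (hub : u ≠ b)
    (e : Fin n → ZMod 2) (he : e ≠ 0) :
    ∑ x : Fin n → ZMod 2, sgn2 (dot u (Ψ x + Ψ (x + e))) = 0 := by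
  classical
  obtain ⟨j, hj⟩ := exists_one_coord he
  obtain ⟨hinj, himg⟩ := htr e he j hj
  have hsym : ∀ x : Fin n → ZMod 2, Ψ (x + e) + Ψ (x + e + e) = Ψ x + Ψ (x + e) := by
    intro x
    rw [vadd_add_self, add_comm]
  rw [pair_sum Finset.univ e j hj (fun x _ => Finset.mem_univ _)]
  have hterm : ∀ x : Fin n → ZMod 2,
      sgn2 (dot u (Ψ x + Ψ (x + e))) + sgn2 (dot u (Ψ (x + e) + Ψ (x + e + e)))
        = 2 * sgn2 (dot u (Ψ x + Ψ (x + e))) := by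
    intro x
    rw [hsym]
    ring
  rw [Finset.sum_congr rfl fun x _ => hterm x, ← Finset.mul_sum]
  have himgsum : ∑ x ∈ Finset.univ.filter (fun x : Fin n → ZMod 2 => x j = 0),
      sgn2 (dot u (Ψ x + Ψ (x + e)))
      = ∑ d ∈ Finset.univ.filter (fun d : Fin n → ZMod 2 => dot b d = 0), sgn2 (dot u d) := by
    rw [← himg, Finset.sum_image hinj]
  rw [himgsum]
  obtain ⟨h₀, hh₀H, hh₀u⟩ := exists_indep b u hb hu hub
  rw [hyperplane_char_sum b u h₀ hh₀H hh₀u, mul_zero]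

lemma walsh_sq (b : Fin n → ZMod 2) (hb : b ≠ 0)
    (Ψ : (Fin n → ZMod 2) → (Fin n → ZMod 2)) (htr : Trans14 b Ψ)
    (u : Fin n → ZMod 2) (hu : u ≠ 0) (hub : u ≠ b) :
    (∑ x : Fin n → ZMod 2, sgn2 (dot u (Ψ x))) ^ 2 = 2 ^ n := by
  classical
  rw [sq, Finset.sum_mul_sum]
  have step1 : ∀ x : Fin n → ZMod 2,
      ∑ y : Fin n → ZMod 2, sgn2 (dot u (Ψ x)) * sgn2 (dot u (Ψ y))
        = ∑ e : Fin n → ZMod 2, sgn2 (dot u (Ψ x + Ψ (x + e))) := by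
    intro x
    have h1 : ∀ y : Fin n → ZMod 2,
        sgn2 (dot u (Ψ x)) * sgn2 (dot u (Ψ y)) = sgn2 (dot u (Ψ x + Ψ y)) := by
      intro y
      rw [dot_add_right, sgn2_add]
    rw [Finset.sum_congr rfl fun y _ => h1 y]
    exact (Fintype.sum_equiv (Equiv.addLeft x) _ _ (fun e => rfl)).symm
  rw [Finset.sum_congr rfl fun x _ => step1 x, Finset.sum_comm]
  rw [← Finset.add_sum_erase _ _ (Finset.mem_univ (0 : Fin n → ZMod 2))]
  have hzero : ∑ x : Fin n → ZMod 2, sgn2 (dot u (Ψ x + Ψ (x + 0))) = 2 ^ n := by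
    have : ∀ x : Fin n → ZMod 2, sgn2 (dot u (Ψ x + Ψ (x + 0))) = 1 := by
      intro x
      rw [add_zero, vadd_self, dot_zero_right, sgn2_zero]
    rw [Finset.sum_congr rfl fun x _ => this x, Finset.sum_const, card_univ_V]
    simp
  have hrest : ∑ e ∈ Finset.univ.erase (0 : Fin n → ZMod 2),
      (∑ x : Fin n → ZMod 2, sgn2 (dot u (Ψ x + Ψ (x + e)))) = 0 := by
    refine Finset.sum_eq_zero fun e he => ?_
    exact deriv_sum_zero b hb Ψ htr u hu hub e (Finset.ne_of_mem_erase he)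
  rw [hzero, hrest, add_zero]

lemma int_sq_cases (t A : ℤ) (h : t ^ 2 = A ^ 2) : t = A ∨ t = -A := by
  have h2 : (t - A) * (t + A) = 0 := by ring_nf; linarith [h]
  rcases mul_eq_zero.mp h2 with h3 | h3
  · left; linarith
  · right; linarith


/-! ### The main impossibility lemma: no "perfect nonlinear into a hyperplane" structure -/

lemma veq_of_add_zero {x y : Fin n → ZMod 2} (h : x + y = 0) : x = y := by
  funext i
  exact z2_eq_of_add_zero _ _ (congrFun h i)

lemma main_pn (hn : 3 ≤ n) (b : Fin n → ZMod 2) (hb : b ≠ 0)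
    (Ψ : (Fin n → ZMod 2) → (Fin n → ZMod 2))
    (hΨ0 : ∀ x, dot b (Ψ x) = 0)
    (htr : Trans14 b Ψ) : False := by
  classical
  set W : (Fin n → ZMod 2) → ℤ := fun u => ∑ x : Fin n → ZMod 2, sgn2 (dot u (Ψ x)) with hWdef
  -- pick u₀ ∉ {0, b}
  have hnotsub : ¬ (Finset.univ : Finset (Fin n → ZMod 2)) ⊆ {0, b} := by
    intro hsub
    have hc := Finset.card_le_card hsub
    rw [card_univ_V] at hc
    have h2 : ({0, b} : Finset (Fin n → ZMod 2)).card ≤ 2 := by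
      refine le_trans (Finset.card_insert_le _ _) ?_
      simp
    have h8 : 2 ^ 3 ≤ 2 ^ n := Nat.pow_le_pow_right (by norm_num) hn
    omega
  obtain ⟨u₀, -, hu₀⟩ := Finset.not_subset.mp hnotsub
  have hu₀0 : u₀ ≠ 0 := by intro h; apply hu₀; rw [h]; simp
  have hu₀b : u₀ ≠ b := by intro h; apply hu₀; rw [h]; simp
  -- n is even
  have hWsq : (W u₀) ^ 2 = 2 ^ n := walsh_sq b hb Ψ htr u₀ hu₀0 hu₀b
  obtain ⟨k, hk2, hnk⟩ : ∃ k, 2 ≤ k ∧ n = 2 * k := by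
    have hNsq : (W u₀).natAbs ^ 2 = 2 ^ n := by
      have := congrArg Int.natAbs hWsq
      rw [Int.natAbs_pow] at this
      rw [this]
      simp [Int.natAbs_pow]
    have hdvd : (W u₀).natAbs ∣ 2 ^ n := ⟨(W u₀).natAbs, by rw [← hNsq]; ring⟩
    obtain ⟨k, hkle, hkeq⟩ := (Nat.dvd_prime_pow Nat.prime_two).mp hdvd
    rw [hkeq, ← pow_mul] at hNsq
    have h2k : k * 2 = n := Nat.pow_right_injective (le_refl 2) hNsq
    exact ⟨k, by omega, by omega⟩
  -- setup
  obtain ⟨j₀, hbj⟩ : ∃ j, b j = 1 := exists_one_coord hb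
  set R : Finset (Fin n → ZMod 2) := Finset.univ.filter (fun u : Fin n → ZMod 2 => u j₀ = 0) with hRdef
  set y : Fin n → ZMod 2 := Ψ 0 with hydef
  set m : ℕ := (Finset.univ.filter (fun x : Fin n → ZMod 2 => Ψ x = y)).card with hmdef
  set t : (Fin n → ZMod 2) → ℤ := fun u => sgn2 (dot u y) * W u with htdef
  have hby : dot b y = 0 := hΨ0 0
  -- Identity I : ∑_u t u = 2^n * m
  have hI : ∑ u : Fin n → ZMod 2, t u = (2 ^ n : ℤ) * m := by
    have hstep : ∀ u : Fin n → ZMod 2, t u = ∑ x : Fin n → ZMod 2, sgn2 (dot u (Ψ x + y)) := by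
      intro u
      rw [htdef]
      simp only [hWdef]
      rw [Finset.mul_sum]
      refine Finset.sum_congr rfl fun x _ => ?_
      rw [dot_add_right, sgn2_add, mul_comm]
    rw [Finset.sum_congr rfl fun u _ => hstep u, Finset.sum_comm]
    have hinner : ∀ x : Fin n → ZMod 2,
        ∑ u : Fin n → ZMod 2, sgn2 (dot u (Ψ x + y)) = if Ψ x = y then (2 ^ n : ℤ) else 0 := by
      intro x
      by_cases hxy : Ψ x = y
      · rw [if_pos hxy, hxy, vadd_self]
        have : ∀ u : Fin n → ZMod 2, sgn2 (dot u (0 : Fin n → ZMod 2)) = 1 := by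
          intro u; rw [dot_zero_right, sgn2_zero]
        rw [Finset.sum_congr rfl fun u _ => this u, Finset.sum_const, card_univ_V]
        simp
      · rw [if_neg hxy]
        refine ortho fun h0 => hxy (veq_of_add_zero h0)
    rw [Finset.sum_congr rfl fun x _ => hinner x]
    rw [Finset.sum_ite, Finset.sum_const, Finset.sum_const_zero, add_zero, nsmul_eq_mul]
    rw [mul_comm]
  -- pairing over cosets of {0, b}
  have hpair : ∑ u : Fin n → ZMod 2, t u = 2 * ∑ u ∈ R, t u := by
    rw [pair_sum Finset.univ b j₀ hbj (fun x _ => Finset.mem_univ _) t]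
    rw [Finset.mul_sum]
    refine Finset.sum_congr rfl fun u _ => ?_
    have hWb : W (u + b) = W u := by
      simp only [hWdef]
      refine Finset.sum_congr rfl fun x _ => ?_
      rw [dot_add_left, hΨ0 x, add_zero]
    have hsb : sgn2 (dot (u + b) y) = sgn2 (dot u y) := by
      rw [dot_add_left, hby, add_zero]
    simp only [htdef, hWb, hsb]
    ring
  -- split off u = 0
  have h0R : (0 : Fin n → ZMod 2) ∈ R := by
    rw [hRdef]
    simp
  have ht0 : t 0 = 2 ^ n := by
    simp only [htdef, hWdef]
    rw [dot_zero_left, sgn2_zero, one_mul]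
    have : ∀ x : Fin n → ZMod 2, sgn2 (dot 0 (Ψ x)) = 1 := by
      intro x; rw [dot_zero_left, sgn2_zero]
    rw [Finset.sum_congr rfl fun x _ => this x, Finset.sum_const, card_univ_V]
    simp
  have hsplit : ∑ u ∈ R, t u = 2 ^ n + ∑ u ∈ R.erase 0, t u := by
    rw [← Finset.add_sum_erase R t h0R, ht0]
  -- each remaining term is ±2^k
  have hpm : ∀ u ∈ R.erase 0, t u = 2 ^ k ∨ t u = -(2 ^ k) := by
    intro u hu
    have hune : u ≠ 0 := Finset.ne_of_mem_erase hu
    have huR : u ∈ R := Finset.mem_of_mem_erase hu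
    have huj : u j₀ = 0 := by
      rw [hRdef] at huR
      exact (Finset.mem_filter.mp huR).2
    have hub : u ≠ b := by
      intro h
      rw [h, hbj] at huj
      exact one_ne_zero huj
    have hWu : (W u) ^ 2 = 2 ^ n := walsh_sq b hb Ψ htr u hune hub
    have htu : (t u) ^ 2 = ((2 : ℤ) ^ k) ^ 2 := by
      have hs2 : sgn2 (dot u y) ^ 2 = 1 := by
        rcases sgn2_cases (dot u y) with h | h <;> rw [h] <;> norm_num
      rw [htdef]
      simp only
      rw [mul_pow, hs2, one_mul, hWu, ← pow_mul, hnk]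
      ring_nf
    exact int_sq_cases _ _ htu
  set K : ℤ := ∑ u ∈ R.erase 0, (if t u = 2 ^ k then (1 : ℤ) else -1) with hKdef
  have hsum2 : ∑ u ∈ R.erase 0, t u = 2 ^ k * K := by
    rw [hKdef, Finset.mul_sum]
    refine Finset.sum_congr rfl fun u hu => ?_
    rcases hpm u hu with h | h
    · rw [if_pos h, h, mul_one]
    · have hne : t u ≠ 2 ^ k := by
        rw [h]
        intro hcon
        have : (2 : ℤ) ^ (k + 1) = 0 := by
          rw [pow_succ]
          linarith
        exact pow_ne_zero (k + 1) (by norm_num) this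
      rw [if_neg hne, h]
      ring
  -- cardinalities
  have hcardR : 2 * R.card = 2 ^ n := by
    rw [hRdef]
    exact card_coord_slice j₀
  have hcarderase : (R.erase 0).card = R.card - 1 := Finset.card_erase_of_mem h0R
  have hPpos : 0 < 2 ^ (2 * k - 2) := Nat.pow_pos (by norm_num)
  have hcardodd : (R.erase 0).card % 2 = 1 := by
    have h4 : 2 ^ n = 4 * 2 ^ (2 * k - 2) := by
      rw [hnk, show 2 * k = 2 + (2 * k - 2) by omega, pow_add]
      norm_num
    omega
  -- K is odd
  have hKcast : (K : ZMod 2) = 1 := by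
    rw [hKdef]
    push_cast
    have hterm : ∀ u ∈ R.erase 0,
        (if t u = 2 ^ k then (1 : ZMod 2) else -1) = 1 := by
      intro u _
      split
      · rfl
      · decide
    rw [Finset.sum_congr rfl hterm, Finset.sum_const, nsmul_eq_mul, mul_one]
    obtain ⟨q, hq⟩ : ∃ q, (R.erase 0).card = 2 * q + 1 := ⟨(R.erase 0).card / 2, by omega⟩
    rw [hq, Nat.cast_add, Nat.cast_mul, Nat.cast_one]
    have h2 : ((2 : ℕ) : ZMod 2) = 0 := by decide
    rw [h2, zero_mul, zero_add]
  have h2K : ¬ ((2 : ℤ) ∣ K) := by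
    intro hdvd
    have hz := (ZMod.intCast_zmod_eq_zero_iff_dvd K 2).mpr hdvd
    rw [hKcast] at hz
    exact one_ne_zero hz
  have heq : (2 : ℤ) ^ n * m = 2 * (2 ^ n + 2 ^ k * K) := by
    rw [← hI, hpair, hsplit, hsum2]
  have e1 : (2 : ℤ) ^ n = 2 ^ (k + 1) * 2 ^ (k - 1) := by
    rw [← pow_add]
    congr 1
    omega
  have e2 : (2 : ℤ) * 2 ^ n = 2 ^ (k + 1) * 2 ^ k := by
    rw [← pow_succ', ← pow_add]
    congr 1
    omega
  have e3 : (2 : ℤ) * (2 ^ k * K) = 2 ^ (k + 1) * K := by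
    rw [← mul_assoc, ← pow_succ']
  have heq2 : (2 : ℤ) ^ (k + 1) * (2 ^ (k - 1) * (m : ℤ)) = 2 ^ (k + 1) * (2 ^ k + K) := by
    calc (2 : ℤ) ^ (k + 1) * (2 ^ (k - 1) * (m : ℤ)) = 2 ^ n * m := by rw [← mul_assoc, ← e1]
      _ = 2 * (2 ^ n + 2 ^ k * K) := heq
      _ = 2 ^ (k + 1) * (2 ^ k + K) := by rw [mul_add, e2, e3, ← mul_add]
  have hfin : (2 : ℤ) ^ (k - 1) * (m : ℤ) = 2 ^ k + K :=
    mul_left_cancel₀ (pow_ne_zero _ (by norm_num : (2 : ℤ) ≠ 0)) heq2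
  have hdvdK : (2 : ℤ) ∣ K := by
    have hk1 : (2 : ℤ) ∣ 2 ^ (k - 1) := dvd_pow_self 2 (by omega : k - 1 ≠ 0)
    have hkk : (2 : ℤ) ∣ 2 ^ k := dvd_pow_self 2 (by omega : k ≠ 0)
    have hKv : K = 2 ^ (k - 1) * (m : ℤ) - 2 ^ k := by linarith [hfin]
    rw [hKv]
    exact dvd_sub (Dvd.dvd.mul_right hk1 _) hkk
  exact h2K hdvdK


/-! ### APN-based injectivity and the two `Trans14` constructions -/

lemma apn_slice_inj {F' : (Fin n → ZMod 2) → (Fin n → ZMod 2)} (hF' : IsAPN F')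
    {e : Fin n → ZMod 2} (he : e ≠ 0) {j : Fin n} (hej : e j = 1) :
    ∀ x ∈ Finset.univ.filter (fun x : Fin n → ZMod 2 => x j = 0),
    ∀ y ∈ Finset.univ.filter (fun x : Fin n → ZMod 2 => x j = 0),
      F' x + F' (x + e) = F' y + F' (y + e) → x = y := by
  classical
  intro x hx y hy hval
  by_contra hxy
  have hxj : x j = 0 := (Finset.mem_filter.mp hx).2
  have hyj : y j = 0 := (Finset.mem_filter.mp hy).2
  have hcard := hF' e he (F' x + F' (x + e))
  have hxmem : x ∈ Finset.univ.filter (fun z => F' z + F' (z + e) = F' x + F' (x + e)) := by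
    simp
  have hymem : y ∈ Finset.univ.filter (fun z => F' z + F' (z + e) = F' x + F' (x + e)) := by
    simp only [Finset.mem_filter]
    exact ⟨Finset.mem_univ _, hval.symm⟩
  have hxemem : x + e ∈ Finset.univ.filter
      (fun z => F' z + F' (z + e) = F' x + F' (x + e)) := by
    simp only [Finset.mem_filter]
    refine ⟨Finset.mem_univ _, ?_⟩
    rw [vadd_add_self, add_comm]
  have hxe : x ≠ x + e := by
    intro h
    exact he (vcancel h.symm)
  have hyxe : y ≠ x + e := by
    intro h
    have : y j = (x + e) j := by rw [h]
    rw [hyj, Pi.add_apply, hxj, hej] at this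
    exact one_ne_zero this.symm
  have hsub : ({x, x + e, y} : Finset (Fin n → ZMod 2)) ⊆
      Finset.univ.filter (fun z => F' z + F' (z + e) = F' x + F' (x + e)) := by
    intro z hz
    simp only [Finset.mem_insert, Finset.mem_singleton] at hz
    rcases hz with rfl | rfl | rfl
    · exact hxmem
    · exact hxemem
    · exact hymem
  have hc3 : ({x, x + e, y} : Finset (Fin n → ZMod 2)).card = 3 := by
    rw [Finset.card_insert_of_notMem (by
      simp only [Finset.mem_insert, Finset.mem_singleton]
      push_neg
      exact ⟨hxe, hxy⟩)]
    rw [Finset.card_insert_of_notMem (by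
      simp only [Finset.mem_singleton]
      exact fun h => hyxe h.symm)]
    rw [Finset.card_singleton]
  have := Finset.card_le_card hsub
  rw [hc3] at this
  omega

lemma card_hyperplane (b : Fin n → ZMod 2) (hb : b ≠ 0) :
    2 * (Finset.univ.filter (fun d : Fin n → ZMod 2 => dot b d = 0)).card = 2 ^ n := by
  classical
  obtain ⟨j₀, hbj⟩ := exists_one_coord hb
  have hpair := pair_sum (M := ℕ) Finset.univ (unitV j₀) j₀ (unitV_self j₀)
      (fun x _ => Finset.mem_univ _) (fun x => if dot b x = 0 then 1 else 0)
  have hl : (∑ x : Fin n → ZMod 2, if dot b x = 0 then (1 : ℕ) else 0)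
      = (Finset.univ.filter (fun d : Fin n → ZMod 2 => dot b d = 0)).card := by
    rw [Finset.sum_ite, Finset.sum_const, Finset.sum_const_zero, add_zero, smul_eq_mul, mul_one]
  have hr : ∀ x : Fin n → ZMod 2,
      ((if dot b x = 0 then (1 : ℕ) else 0) + if dot b (x + unitV j₀) = 0 then 1 else 0)
        = 1 := by
    intro x
    have hx : dot b (x + unitV j₀) = dot b x + 1 := by
      rw [dot_add_right, dot_unitV_right, hbj]
    rcases (by decide : ∀ s : ZMod 2, s = 0 ∨ s = 1) (dot b x) with h | h
    · rw [if_pos h, hx, h, if_neg (by decide : ¬((0 : ZMod 2) + 1 = 0))]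
    · rw [if_neg (by rw [h]; decide), hx, h, if_pos (by decide : ((1 : ZMod 2) + 1 = 0))]
  rw [hl, Finset.sum_congr rfl (fun x _ => hr x), Finset.sum_const, smul_eq_mul, mul_one] at hpair
  rw [hpair]
  exact card_coord_slice j₀


lemma pn1_trans {F' : (Fin n → ZMod 2) → (Fin n → ZMod 2)} (hF' : IsAPN F')
    {b : Fin n → ZMod 2} (hb : b ≠ 0)
    (hzero : ∀ x, dot b (F' x) = 0) : Trans14 b F' := by
  classical
  intro e he j hej
  refine ⟨apn_slice_inj hF' he hej, ?_⟩
  have hsub : (Finset.univ.filter (fun x : Fin n → ZMod 2 => x j = 0)).image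
      (fun x => F' x + F' (x + e))
      ⊆ Finset.univ.filter (fun d : Fin n → ZMod 2 => dot b d = 0) := by
    intro d hd
    obtain ⟨x, _, rfl⟩ := Finset.mem_image.mp hd
    rw [Finset.mem_filter]
    exact ⟨Finset.mem_univ _, by rw [dot_add_right, hzero, hzero, add_zero]⟩
  have hcardim : ((Finset.univ.filter (fun x : Fin n → ZMod 2 => x j = 0)).image
      (fun x => F' x + F' (x + e))).card
      = (Finset.univ.filter (fun x : Fin n → ZMod 2 => x j = 0)).card := by
    apply Finset.card_image_of_injOn
    intro x hx y hy hxy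
    exact apn_slice_inj hF' he hej x (Finset.mem_coe.mp hx) y (Finset.mem_coe.mp hy) hxy
  apply Finset.eq_of_subset_of_card_le hsub
  rw [hcardim]
  have h1 := card_coord_slice (n := n) j
  have h2 := card_hyperplane b hb
  have h3 : 2 * (Finset.univ.filter (fun x : Fin n → ZMod 2 => x j = 0)).card
      = 2 * (Finset.univ.filter (fun d : Fin n → ZMod 2 => dot b d = 0)).card := by
    rw [h1, h2]
  exact le_of_eq (Nat.eq_of_mul_eq_mul_left (by norm_num) h3.symm)

lemma hyperplane_sum_zero (hn : 3 ≤ n) (b : Fin n → ZMod 2) (hb : b ≠ 0) :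
    ∑ d ∈ Finset.univ.filter (fun d : Fin n → ZMod 2 => dot b d = 0), d = 0 := by
  classical
  obtain ⟨j₀, hbj⟩ := exists_one_coord hb
  obtain ⟨k₀, -, hk₀⟩ : ∃ k ∈ (Finset.univ : Finset (Fin n)), k ≠ j₀ := by
    apply Finset.exists_mem_ne
    rw [Finset.card_univ, Fintype.card_fin]
    omega
  set r₀ : Fin n → ZMod 2 := unitV k₀ + b k₀ • unitV j₀ with hr₀def
  have hr₀H : dot b r₀ = 0 := by
    rw [hr₀def, dot_add_right, dot_smul_right, dot_unitV_right, dot_unitV_right, hbj, mul_one,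
      z2_add_self]
  have hr₀k : r₀ k₀ = 1 := by
    rw [hr₀def]
    have h1 : unitV (n := n) k₀ k₀ = 1 := unitV_self k₀
    have h2 : unitV (n := n) j₀ k₀ = 0 := unitV_ne hk₀
    rw [Pi.add_apply, Pi.smul_apply, h1, h2, smul_eq_mul, mul_zero, add_zero]
  have hclosed : ∀ x ∈ Finset.univ.filter (fun d : Fin n → ZMod 2 => dot b d = 0),
      x + r₀ ∈ Finset.univ.filter (fun d : Fin n → ZMod 2 => dot b d = 0) := by
    intro x hx
    rw [Finset.mem_filter] at hx ⊢
    exact ⟨Finset.mem_univ _, by rw [dot_add_right, hx.2, hr₀H, add_zero]⟩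
  rw [pair_sum _ r₀ k₀ hr₀k hclosed]
  have hterm : ∀ x : Fin n → ZMod 2, x + (x + r₀) = r₀ := by
    intro x
    rw [← add_assoc, vadd_self, zero_add]
  rw [Finset.sum_congr rfl (fun x _ => hterm x), Finset.sum_const]
  -- the count is even
  have hpc := pair_card (Finset.univ.filter (fun d : Fin n → ZMod 2 => dot b d = 0))
      r₀ k₀ hr₀k hclosed
  have hch := card_hyperplane b hb
  have h8 : 2 ^ n = 8 * 2 ^ (n - 3) := by
    rw [show n = 3 + (n - 3) from (Nat.add_sub_cancel' hn).symm, pow_add]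
    norm_num
  set c0 := ((Finset.univ.filter (fun d : Fin n → ZMod 2 => dot b d = 0)).filter
      (fun x => x k₀ = 0)).card with hc0
  set cH := (Finset.univ.filter (fun d : Fin n → ZMod 2 => dot b d = 0)).card with hcH
  set P := 2 ^ (n - 3) with hP
  set Q := 2 ^ n with hQ
  obtain ⟨q, hq⟩ : ∃ q, c0 = q + q := by
    refine ⟨P, ?_⟩
    clear_value c0 cH P Q
    clear hc0 hcH hP hQ hclosed hterm hr₀k hr₀H hr₀def hbj hk₀ hb hn
    omega
  rw [hq, add_nsmul, vadd_self]


lemma nat_arith1 {A1 A2 Q : ℕ} (h1 : 2 * A1 = Q - 2) (h2 : 2 * A2 = Q) (h3 : 8 ≤ Q) :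
    A1 + 1 = A2 := by omega

lemma nat_arith2 {A1 A2 : ℕ} (h : A1 + 1 = A2) : A2 - A1 = 1 := by omega

lemma nat_arith3 {A1 A2 : ℕ} (h : A1 + 1 = A2) : A2 - 1 ≤ A1 := by omega

lemma pn2 (hn : 3 ≤ n) {F' : (Fin n → ZMod 2) → (Fin n → ZMod 2)} (hF' : IsAPN F')
    {b : Fin n → ZMod 2} (hb : b ≠ 0) {x₀ : Fin n → ZMod 2}
    (h1 : dot b (F' x₀) = 1) (h0 : ∀ x, x ≠ x₀ → dot b (F' x) = 0) :
    ∃ Ψ : (Fin n → ZMod 2) → (Fin n → ZMod 2),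
      (∀ x, dot b (Ψ x) = 0) ∧ Trans14 b Ψ := by
  classical
  set S : Fin n → ZMod 2 := ∑ z : Fin n → ZMod 2, F' z with hSdef
  have hbS : dot b S = 1 := by
    rw [hSdef, dot_sum_right]
    have hpt : ∀ z : Fin n → ZMod 2, dot b (F' z) = if z = x₀ then 1 else 0 := by
      intro z
      by_cases hz : z = x₀
      · rw [if_pos hz, hz, h1]
      · rw [if_neg hz, h0 z hz]
    rw [Finset.sum_congr rfl fun z _ => hpt z]
    simp
  set Φ : (Fin n → ZMod 2) → (Fin n → ZMod 2) := Function.update F' x₀ (F' x₀ + S) with hΦdef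
  have hΦx₀ : Φ x₀ = F' x₀ + S := Function.update_self x₀ _ F'
  have hΦne : ∀ x, x ≠ x₀ → Φ x = F' x := fun x hx => Function.update_of_ne hx _ F'
  have hΦ0 : ∀ x, dot b (Φ x) = 0 := by
    intro x
    by_cases hx : x = x₀
    · rw [hx, hΦx₀, dot_add_right, h1, hbS]
      decide
    · rw [hΦne x hx, h0 x hx]
  refine ⟨Φ, hΦ0, ?_⟩
  intro e he j hej
  set x₁ : Fin n → ZMod 2 := x₀ + e with hx₁def
  have hx₁x₀ : x₁ ≠ x₀ := fun h => he (vcancel h)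
  have hx₀x₁ : x₀ ≠ x₁ := fun h => hx₁x₀ h.symm
  have hx₀e : x₁ + e = x₀ := by rw [hx₁def, vadd_add_self]
  have hx1j : x₁ j = x₀ j + 1 := by rw [hx₁def, Pi.add_apply, hej]
  have hxe_ne : ∀ x : Fin n → ZMod 2, x ≠ x₁ → x + e ≠ x₀ := by
    intro x hx hcon
    apply hx
    calc x = x + e + e := (vadd_add_self x e).symm
      _ = x₀ + e := by rw [hcon]
      _ = x₁ := hx₁def.symm
  have hxe_ne' : ∀ x : Fin n → ZMod 2, x ≠ x₀ → x + e ≠ x₁ := by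
    intro x hx hcon
    apply hx
    calc x = x + e + e := (vadd_add_self x e).symm
      _ = x₁ + e := by rw [hcon]
      _ = x₀ := hx₀e
  set w : Fin n → ZMod 2 := S + F' x₀ + F' x₁ with hwdef
  -- derivative values of Φ
  have hDx₀ : Φ x₀ + Φ (x₀ + e) = w := by
    rw [← hx₁def, hΦx₀, hΦne x₁ hx₁x₀, hwdef]
    abel
  have hDx₁ : Φ x₁ + Φ (x₁ + e) = w := by
    rw [hx₀e, hΦne x₁ hx₁x₀, hΦx₀, hwdef]
    abel
  have hDother : ∀ x, x ≠ x₀ → x ≠ x₁ → Φ x + Φ (x + e) = F' x + F' (x + e) := by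
    intro x hxa hxb
    rw [hΦne x hxa, hΦne (x + e) (hxe_ne x hxb)]
  -- the punctured domain
  set Xe : Finset (Fin n → ZMod 2) := Finset.univ \ {x₀, x₁} with hXedef
  have hmemXe : ∀ x : Fin n → ZMod 2, x ∈ Xe ↔ (x ≠ x₀ ∧ x ≠ x₁) := by
    intro x
    rw [hXedef, Finset.mem_sdiff, Finset.mem_insert, Finset.mem_singleton]
    constructor
    · intro h
      exact ⟨fun hc => h.2 (Or.inl hc), fun hc => h.2 (Or.inr hc)⟩
    · intro h
      exact ⟨Finset.mem_univ _, fun hc => hc.elim h.1 h.2⟩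
  have hXeclosed : ∀ x ∈ Xe, x + e ∈ Xe := by
    intro x hx
    rw [hmemXe] at hx ⊢
    exact ⟨hxe_ne x hx.2, hxe_ne' x hx.1⟩
  have hpairXe := pair_sum Xe e j hej hXeclosed F'
  have hpcXe := pair_card Xe e j hej hXeclosed
  set T' := Xe.filter (fun x => x j = 0) with hT'def
  have hT'mem : ∀ x : Fin n → ZMod 2, x ∈ T' ↔ (x ≠ x₀ ∧ x ≠ x₁ ∧ x j = 0) := by
    intro x
    rw [hT'def, Finset.mem_filter, hmemXe]
    tauto
  have hT'slice : ∀ x ∈ T', x ∈ Finset.univ.filter (fun x : Fin n → ZMod 2 => x j = 0) := by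
    intro x hx
    rw [hT'mem] at hx
    exact Finset.mem_filter.mpr ⟨Finset.mem_univ _, hx.2.2⟩
  have hT'inj : ∀ x ∈ T', ∀ y ∈ T', F' x + F' (x + e) = F' y + F' (y + e) → x = y := by
    intro x hx y hy hval
    exact apn_slice_inj hF' he hej x (hT'slice x hx) y (hT'slice y hy) hval
  set image' := T'.image (fun x => F' x + F' (x + e)) with himgdef
  -- sums
  have hsumXe : ∑ x ∈ Xe, F' x = w := by
    have hsdiff := Finset.sum_sdiff (f := F') (Finset.subset_univ ({x₀, x₁} : Finset _))
    rw [Finset.sum_pair hx₀x₁] at hsdiff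
    have h2 := vshift_iff.mp hsdiff
    rw [hXedef, h2, hwdef, ← hSdef]
    abel
  have hsumimg : ∑ d ∈ image', d = w := by
    rw [himgdef, Finset.sum_image hT'inj, ← hpairXe]
    exact hsumXe
  -- memberships in the hyperplane
  have himgsub : image' ⊆ Finset.univ.filter (fun d : Fin n → ZMod 2 => dot b d = 0) := by
    intro d hd
    rw [himgdef, Finset.mem_image] at hd
    obtain ⟨x, hx, rfl⟩ := hd
    rw [hT'mem] at hx
    rw [Finset.mem_filter]
    refine ⟨Finset.mem_univ _, ?_⟩
    rw [dot_add_right, h0 x hx.1, h0 (x + e) (hxe_ne x hx.2.1), add_zero]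
  have hbw : w ∈ Finset.univ.filter (fun d : Fin n → ZMod 2 => dot b d = 0) := by
    rw [Finset.mem_filter]
    refine ⟨Finset.mem_univ _, ?_⟩
    rw [hwdef, dot_add_right, dot_add_right, hbS, h1, h0 x₁ hx₁x₀]
    decide
  -- cardinalities
  have hcardXe : Xe.card = 2 ^ n - 2 := by
    rw [hXedef, Finset.card_sdiff_of_subset (Finset.subset_univ _), card_univ_V, Finset.card_pair hx₀x₁]
  have hcardHb := card_hyperplane b hb
  have himgT' : image'.card = T'.card := by
    rw [himgdef]
    apply Finset.card_image_of_injOn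
    intro x hx y hy hxy
    exact hT'inj x (Finset.mem_coe.mp hx) y (Finset.mem_coe.mp hy) hxy
  have h8 : (8 : ℕ) ≤ 2 ^ n := by
    calc (8 : ℕ) = 2 ^ 3 := by norm_num
      _ ≤ 2 ^ n := Nat.pow_le_pow_right (by norm_num) hn
  have hcardnum : T'.card + 1
      = (Finset.univ.filter (fun d : Fin n → ZMod 2 => dot b d = 0)).card := by
    refine nat_arith1 ?_ hcardHb h8
    rw [← hpcXe, hcardXe]
  -- the missing point
  have hcards : ((Finset.univ.filter (fun d : Fin n → ZMod 2 => dot b d = 0)) \ image').card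
      = 1 := by
    rw [Finset.card_sdiff_of_subset himgsub, himgT']
    exact nat_arith2 hcardnum
  obtain ⟨z, hz⟩ := Finset.card_eq_one.mp hcards
  have hzmem : z ∈ (Finset.univ.filter (fun d : Fin n → ZMod 2 => dot b d = 0)) \ image' := by
    rw [hz]
    exact Finset.mem_singleton_self z
  have hzHb : z ∈ Finset.univ.filter (fun d : Fin n → ZMod 2 => dot b d = 0) :=
    (Finset.mem_sdiff.mp hzmem).1
  have hznot : z ∉ image' := (Finset.mem_sdiff.mp hzmem).2
  have himgerase : image'
      = (Finset.univ.filter (fun d : Fin n → ZMod 2 => dot b d = 0)).erase z := by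
    apply Finset.eq_of_subset_of_card_le
    · intro d hd
      exact Finset.mem_erase.mpr ⟨fun hcon => hznot (hcon ▸ hd), himgsub hd⟩
    · rw [Finset.card_erase_of_mem hzHb, himgT']
      exact nat_arith3 hcardnum
  have hzw : z = w := by
    have hsz := Finset.add_sum_erase
      (Finset.univ.filter (fun d : Fin n → ZMod 2 => dot b d = 0)) (fun d => d) hzHb
    rw [hyperplane_sum_zero hn b hb] at hsz
    have h2' : ∑ d ∈ (Finset.univ.filter
        (fun d : Fin n → ZMod 2 => dot b d = 0)).erase z, d = z :=
      (veq_of_add_zero hsz).symm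
    rw [← himgerase, hsumimg] at h2'
    exact h2'.symm
  rw [hzw] at himgerase hznot
  -- final interface
  constructor
  · -- injectivity of the Φ-derivative on the slice
    intro x hx y hy hval
    have hxj : x j = 0 := (Finset.mem_filter.mp hx).2
    have hyj : y j = 0 := (Finset.mem_filter.mp hy).2
    by_cases hxc : x = x₀ ∨ x = x₁ <;> by_cases hyc : y = x₀ ∨ y = x₁
    · rcases hxc with h | h <;> rcases hyc with h' | h'
      · rw [h, h']
      · rw [h] at hxj
        rw [h', hx1j, hxj] at hyj
        exact absurd hyj (by decide)
      · rw [h'] at hyj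
        rw [h, hx1j, hyj] at hxj
        exact absurd hxj (by decide)
      · rw [h, h']
    · push_neg at hyc
      have hyT' : y ∈ T' := (hT'mem y).mpr ⟨hyc.1, hyc.2, hyj⟩
      have hDy : Φ y + Φ (y + e) = F' y + F' (y + e) := hDother y hyc.1 hyc.2
      have hDx : Φ x + Φ (x + e) = w := by
        rcases hxc with h | h
        · rw [h]; exact hDx₀
        · rw [h]; exact hDx₁
      have hcon : F' y + F' (y + e) = w := by rw [← hDy, ← hval, hDx]
      have hmem : w ∈ image' := by
        rw [himgdef]
        exact Finset.mem_image.mpr ⟨y, hyT', hcon⟩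
      exact absurd hmem hznot
    · push_neg at hxc
      have hxT' : x ∈ T' := (hT'mem x).mpr ⟨hxc.1, hxc.2, hxj⟩
      have hDx : Φ x + Φ (x + e) = F' x + F' (x + e) := hDother x hxc.1 hxc.2
      have hDy : Φ y + Φ (y + e) = w := by
        rcases hyc with h | h
        · rw [h]; exact hDx₀
        · rw [h]; exact hDx₁
      have hcon : F' x + F' (x + e) = w := by rw [← hDx, hval, hDy]
      have hmem : w ∈ image' := by
        rw [himgdef]
        exact Finset.mem_image.mpr ⟨x, hxT', hcon⟩
      exact absurd hmem hznot
    · push_neg at hxc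
      push_neg at hyc
      apply apn_slice_inj hF' he hej x hx y hy
      rw [← hDother x hxc.1 hxc.2, ← hDother y hyc.1 hyc.2]
      exact hval
  · -- the image is the full hyperplane
    apply Finset.Subset.antisymm
    · intro d hd
      rw [Finset.mem_image] at hd
      obtain ⟨x, hx, rfl⟩ := hd
      have hxj : x j = 0 := (Finset.mem_filter.mp hx).2
      by_cases hxc : x = x₀ ∨ x = x₁
      · have hDx : Φ x + Φ (x + e) = w := by
          rcases hxc with h | h
          · rw [h]; exact hDx₀
          · rw [h]; exact hDx₁
        rw [hDx]
        exact hbw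
      · push_neg at hxc
        rw [hDother x hxc.1 hxc.2]
        exact himgsub (Finset.mem_image.mpr ⟨x, (hT'mem x).mpr ⟨hxc.1, hxc.2, hxj⟩, rfl⟩)
    · intro d hd
      by_cases hdw : d = w
      · subst hdw
        by_cases hx₀j : x₀ j = 0
        · exact Finset.mem_image.mpr
            ⟨x₀, Finset.mem_filter.mpr ⟨Finset.mem_univ _, hx₀j⟩, hDx₀⟩
        · have hx₁j0 : x₁ j = 0 := by
            rw [hx1j, z2_ne_zero _ hx₀j]
            decide
          exact Finset.mem_image.mpr
            ⟨x₁, Finset.mem_filter.mpr ⟨Finset.mem_univ _, hx₁j0⟩, hDx₁⟩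
      · have hd' : d ∈ image' := by
          rw [himgerase]
          exact Finset.mem_erase.mpr ⟨hdw, hd⟩
        rw [himgdef, Finset.mem_image] at hd'
        obtain ⟨x, hxT', hxval⟩ := hd'
        rw [hT'mem] at hxT'
        refine Finset.mem_image.mpr ⟨x, Finset.mem_filter.mpr ⟨Finset.mem_univ _, hxT'.2.2⟩, ?_⟩
        rw [hDother x hxT'.1 hxT'.2.1]
        exact hxval


/-! ### Affine shifts preserve APN, and the core two-point lemma -/

lemma z2_aux1 : ∀ s c : ZMod 2, (s + (c + 1) = 1) ↔ s = c := by decide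

lemma apn_affine {F : (Fin n → ZMod 2) → (Fin n → ZMod 2)} (hF : IsAPN F)
    (a v : Fin n → ZMod 2) (γ : ZMod 2) :
    IsAPN (fun x => F x + (dot a x + γ) • v) := by
  classical
  intro α hα β
  have hkey : ∀ x : Fin n → ZMod 2,
      ((F x + (dot a x + γ) • v) + (F (x + α) + (dot a (x + α) + γ) • v) = β)
        ↔ (F x + F (x + α) = β + (dot a α) • v) := by
    intro x
    have hsm : (dot a x + γ) • v + (dot a (x + α) + γ) • v = (dot a α) • v := by
      rw [← add_smul]
      congr 1
      rw [dot_add_right]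
      have h : ∀ s t u : ZMod 2, s + u + (s + t + u) = t := by decide
      exact h (dot a x) (dot a α) γ
    constructor
    · intro h
      have h2 : (F x + F (x + α)) + ((dot a x + γ) • v + (dot a (x + α) + γ) • v) = β := by
        rw [← h]; abel
      rw [hsm] at h2
      exact vshift_iff.mp h2
    · intro h
      have h2 : (F x + F (x + α)) + (dot a α) • v = β := by
        rw [h, vadd_add_self]
      rw [← hsm] at h2
      rw [← h2]
      abel
  have hle := hF α hα (β + (dot a α) • v)
  refine le_trans (le_of_eq ?_) hle
  congr 1
  apply Finset.filter_congr
  intro x _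
  simp only
  rw [hkey x]

lemma core {F : (Fin n → ZMod 2) → (Fin n → ZMod 2)} (hn : 3 ≤ n) (hF : IsAPN F)
    (a : Fin n → ZMod 2) {b : Fin n → ZMod 2} (hb : b ≠ 0) (c : ZMod 2) :
    2 ≤ (Finset.univ.filter (fun x : Fin n → ZMod 2 => dot a x + dot b (F x) = c)).card := by
  classical
  by_contra hlt
  push_neg at hlt
  obtain ⟨j₀, hbj⟩ := exists_one_coord hb
  set F' : (Fin n → ZMod 2) → (Fin n → ZMod 2) :=
    fun x => F x + (dot a x + (c + 1)) • unitV j₀ with hF'def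
  have hF'apn : IsAPN F' := apn_affine hF a (unitV j₀) (c + 1)
  have hcomp : ∀ x, dot b (F' x) = (dot a x + dot b (F x)) + (c + 1) := by
    intro x
    rw [hF'def]
    simp only
    rw [dot_add_right, dot_smul_right, dot_unitV_right, hbj, mul_one]
    ring
  have hcomp' : ∀ x : Fin n → ZMod 2,
      (dot b (F' x) = 1 ↔ dot a x + dot b (F x) = c) := by
    intro x
    rw [hcomp x]
    exact z2_aux1 _ c
  have hle : (Finset.univ.filter
      (fun x : Fin n → ZMod 2 => dot a x + dot b (F x) = c)).card ≤ 1 := by omega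
  rcases Nat.le_one_iff_eq_zero_or_eq_one.mp hle with h | h
  · have hzero : ∀ x, dot b (F' x) = 0 := by
      intro x
      have hxnot : ¬ (dot a x + dot b (F x) = c) := by
        intro hx
        have hmem : x ∈ Finset.univ.filter
            (fun x : Fin n → ZMod 2 => dot a x + dot b (F x) = c) :=
          Finset.mem_filter.mpr ⟨Finset.mem_univ _, hx⟩
        rw [Finset.card_eq_zero.mp h] at hmem
        exact absurd hmem (Finset.notMem_empty x)
      by_contra hne
      exact hxnot ((hcomp' x).mp (z2_ne_zero _ hne))
    exact main_pn hn b hb F' hzero (pn1_trans hF'apn hb hzero)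
  · obtain ⟨x₀, hx₀⟩ := Finset.card_eq_one.mp h
    have hmem_iff : ∀ x : Fin n → ZMod 2, dot a x + dot b (F x) = c ↔ x = x₀ := by
      intro x
      constructor
      · intro hx
        have hmem : x ∈ Finset.univ.filter
            (fun x : Fin n → ZMod 2 => dot a x + dot b (F x) = c) :=
          Finset.mem_filter.mpr ⟨Finset.mem_univ _, hx⟩
        rw [hx₀] at hmem
        exact Finset.mem_singleton.mp hmem
      · rintro rfl
        have hmem : x ∈ ({x} : Finset (Fin n → ZMod 2)) := Finset.mem_singleton_self x
        rw [← hx₀] at hmem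
        exact (Finset.mem_filter.mp hmem).2
    have h1' : dot b (F' x₀) = 1 := (hcomp' x₀).mpr ((hmem_iff x₀).mpr rfl)
    have h0' : ∀ x, x ≠ x₀ → dot b (F' x) = 0 := by
      intro x hx
      by_contra hne
      exact hx ((hmem_iff x).mp ((hcomp' x).mp (z2_ne_zero _ hne)))
    obtain ⟨Ψ, hΨ0, htr⟩ := pn2 hn hF'apn hb h1' h0'
    exact main_pn hn b hb Ψ hΨ0 htr

end Stmt14

theorem stmt_14 {n : ℕ} (hn : 3 ≤ n) (F : (Fin n → ZMod 2) → (Fin n → ZMod 2))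
    (hF : IsAPN F) : linF F ≤ 2 ^ n - 4 := by
  classical
  rw [linF]
  apply Finset.sup_le
  intro p hp
  have hb : p.2 ≠ 0 := (Finset.mem_filter.mp hp).2
  obtain ⟨a, b⟩ := p
  have hbne : b ≠ 0 := hb
  -- rewrite the Walsh coefficient as a difference of counts
  have hsum : walshF F a b
      = ∑ x ∈ Finset.univ.filter
          (fun x : Fin n → ZMod 2 => dot a x + dot b (F x) = 0), (1 : ℤ)
      + ∑ x ∈ Finset.univ.filter
          (fun x : Fin n → ZMod 2 => ¬ dot a x + dot b (F x) = 0), (-1 : ℤ) := by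
    rw [walshF, ← Finset.sum_filter_add_sum_filter_not Finset.univ
      (fun x : Fin n → ZMod 2 => dot a x + dot b (F x) = 0)]
    congr 1
    · refine Finset.sum_congr rfl fun x hx => ?_
      have hgx : dot a x + dot b (F x) = 0 := (Finset.mem_filter.mp hx).2
      rw [Stmt14.sgn2_pow, hgx, Stmt14.sgn2_zero]
    · refine Finset.sum_congr rfl fun x hx => ?_
      have hgx : ¬ dot a x + dot b (F x) = 0 := (Finset.mem_filter.mp hx).2
      rw [Stmt14.sgn2_pow, Stmt14.z2_ne_zero _ hgx]
      decide
  rw [Finset.sum_const, Finset.sum_const] at hsum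
  have hfilterne : Finset.univ.filter
      (fun x : Fin n → ZMod 2 => ¬ dot a x + dot b (F x) = 0)
      = Finset.univ.filter (fun x : Fin n → ZMod 2 => dot a x + dot b (F x) = 1) := by
    apply Finset.filter_congr
    intro x _
    constructor
    · exact Stmt14.z2_ne_zero _
    · intro h
      rw [h]
      decide
  have hc0 : 2 ≤ (Finset.univ.filter
      (fun x : Fin n → ZMod 2 => dot a x + dot b (F x) = 0)).card :=
    Stmt14.core hn hF a hbne 0
  have hc1 : 2 ≤ (Finset.univ.filter
      (fun x : Fin n → ZMod 2 => ¬ dot a x + dot b (F x) = 0)).card := by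
    rw [hfilterne]
    exact Stmt14.core hn hF a hbne 1
  have htot : (Finset.univ.filter
        (fun x : Fin n → ZMod 2 => dot a x + dot b (F x) = 0)).card
      + (Finset.univ.filter
        (fun x : Fin n → ZMod 2 => ¬ dot a x + dot b (F x) = 0)).card = 2 ^ n := by
    rw [Finset.card_filter_add_card_filter_not]
    exact Stmt14.card_univ_V
  set c0 := (Finset.univ.filter
      (fun x : Fin n → ZMod 2 => dot a x + dot b (F x) = 0)).card with hc0def
  set c1 := (Finset.univ.filter
      (fun x : Fin n → ZMod 2 => ¬ dot a x + dot b (F x) = 0)).card with hc1def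
  have hval : walshF F a b = (c0 : ℤ) - c1 := by
    rw [hsum]
    simp only [nsmul_eq_mul, mul_one, mul_neg_one]
    ring
  rw [hval]
  clear_value c0 c1
  clear hsum hfilterne hc0def hc1def hb
  generalize hM : 2 ^ n = M at htot ⊢
  omega
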